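/- Let d ≥ 1 and let G be a simple graph on a countable vertex set V whose vertices can be enumerated v₀, v₁, v₂, … so that every vertex vₙ has at most d neighbors among {v₀, …, v_{n−1}} (i.e. G is d-degenerate with a witnessing ordering). Let g be a function assigning a real number to every edge of G. Then there exists a map f : V → ℝ^d_d such that for every edge {a,b} of G one has ⟨f(a) − f(b), f(a) − f(b)⟩ = g(a,b), and moreover the image set f(V) is in d-general position; in particular f is injective. -/

import Mathlib

/-- The Minkowski space `ℝ^d_d`. -/
abbrev Mink (d : ℕ) :=
  EuclideanSpace ℝ (Fin d) × EuclideanSpace ℝ (Fin d)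

/-- The indefinite bilinear form of signature `(d, d)` on `Mink d`. -/
noncomputable def mform (d : ℕ) (u v : Mink d) : ℝ :=
  inner ℝ u.1 v.1 - inner ℝ u.2 v.2

/-- A set `S` of points of a real vector space is in `d`-general position if every
subset of `S` with at most `d + 1` elements is affinely independent. -/
def InGenPos (d : ℕ) {W : Type*} [AddCommGroup W] [Module ℝ W] (S : Set W) : Prop :=
  ∀ t : Finset W, ↑t ⊆ S → t.card ≤ d + 1 → AffineIndependent ℝ (fun x : t => (x : W))

noncomputable section AuxMink

open Polynomial

/-- The moment curve in `ℝ^d`, evaluated at natural parameters. -/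
def mcurve (d : ℕ) (n : ℕ) : EuclideanSpace ℝ (Fin d) :=
  WithLp.toLp 2 (fun i : Fin d => (n : ℝ) ^ (i.1 + 1))

lemma exists_interp (d : ℕ) (s : Finset ℝ) (hs : s.card ≤ d + 1) (vf : ℝ → ℝ) :
    ∃ R : ℝ[X], R.natDegree ≤ d ∧ ∀ x ∈ s, R.eval x = vf x := by
  classical
  refine ⟨Lagrange.interpolate s id vf, ?_, fun x hx => ?_⟩
  · by_cases h0 : Lagrange.interpolate s id vf = 0
    · simp [h0]
    · have h1 := Lagrange.degree_interpolate_lt (r := vf) (v := id) (s := s)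
        (Set.injOn_id _)
      have h2 : (Lagrange.interpolate s id vf).natDegree < s.card :=
        (Polynomial.natDegree_lt_iff_degree_lt h0).2 h1
      omega
  · simpa using Lagrange.eval_interpolate_at_node vf (Set.injOn_id _) hx

/-- Inner product of a moment-curve difference against the coefficient vector of a
polynomial of degree at most `d`. -/
lemma inner_mcurve_coeff (d : ℕ) (R : ℝ[X]) (hR : R.natDegree ≤ d) (a b : ℕ) :
    (inner ℝ (mcurve d a - mcurve d b) (WithLp.toLp 2 (fun i : Fin d => R.coeff (i.1 + 1)) : EuclideanSpace ℝ (Fin d)) : ℝ)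
      = R.eval (a : ℝ) - R.eval (b : ℝ) := by
  have hev : ∀ x : ℝ, R.eval x = ∑ i ∈ Finset.range (d + 1), R.coeff i * x ^ i := fun x =>
    Polynomial.eval_eq_sum_range' (Nat.lt_succ_of_le hR) x
  rw [PiLp.inner_apply]
  simp only [RCLike.inner_apply, conj_trivial]
  simp only [mul_comm (R.coeff _)]
  have hL : ∑ i : Fin d, (mcurve d a - mcurve d b) i * R.coeff (i.1 + 1)
      = ∑ i ∈ Finset.range d, (((a : ℝ)) ^ (i + 1) - ((b : ℝ)) ^ (i + 1)) * R.coeff (i + 1) := by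
    rw [← Fin.sum_univ_eq_sum_range
      (fun i => (((a : ℝ)) ^ (i + 1) - ((b : ℝ)) ^ (i + 1)) * R.coeff (i + 1)) d]
    refine Finset.sum_congr rfl fun i _ => ?_
    rw [PiLp.sub_apply]
    rfl
  rw [hL, hev, hev, ← Finset.sum_sub_distrib, Finset.sum_range_succ'
    (fun i => R.coeff i * (a : ℝ) ^ i - R.coeff i * (b : ℝ) ^ i) d]
  simp only [pow_zero, mul_one, sub_self, add_zero]
  exact Finset.sum_congr rfl fun i _ => by ring

/-- Distinct points on the moment curve in `ℝ^d`, at most `d+1` of them, are affinely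
independent. -/
lemma mcurve_affineIndependent (d : ℕ) {ι : Type*} [Fintype ι] (idx : ι → ℕ)
    (hinj : Function.Injective idx) (hcard : Fintype.card ι ≤ d + 1) :
    AffineIndependent ℝ (fun j => mcurve d (idx j)) := by
  classical
  rw [affineIndependent_iff]
  intro s w hw0 hws j0 hj0
  obtain ⟨R, hR, hRe⟩ := exists_interp d (s.image (fun j => ((idx j : ℝ))))
    (le_trans (Finset.card_image_le) (le_trans (Finset.card_le_univ s) (by simpa using hcard)))
    (fun x => if x = (idx j0 : ℝ) then 1 else 0)
  have hev : ∀ x : ℝ, R.eval x = ∑ i ∈ Finset.range (d + 1), R.coeff i * x ^ i := fun x =>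
    Polynomial.eval_eq_sum_range' (Nat.lt_succ_of_le hR) x
  have key : ∑ j ∈ s, w j * R.eval ((idx j : ℝ)) = w j0 := by
    have : ∀ j ∈ s, w j * R.eval ((idx j : ℝ)) = if j = j0 then w j else 0 := by
      intro j hj
      rw [hRe _ (Finset.mem_image_of_mem _ hj)]
      by_cases h : j = j0
      · simp [h]
      · have : ((idx j : ℝ)) ≠ ((idx j0 : ℝ)) := by
          exact_mod_cast fun hc => h (hinj (Nat.cast_injective hc))
        simp [h, this]
    rw [Finset.sum_congr rfl this, Finset.sum_ite_eq' s j0 w]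
    simp [hj0]
  have key2 : ∑ j ∈ s, w j * R.eval ((idx j : ℝ)) = 0 := by
    have hcoord : ∀ k, k < d → ∑ j ∈ s, w j * ((idx j : ℝ)) ^ (k + 1) = 0 := by
      intro k hk
      have h1 := congrArg (EuclideanSpace.projₗ (𝕜 := ℝ) (⟨k, hk⟩ : Fin d)) hws
      rw [map_sum, map_zero] at h1
      rw [← h1]
      refine Finset.sum_congr rfl fun j hj => ?_
      rw [map_smul]
      simp [mcurve]
    calc ∑ j ∈ s, w j * R.eval ((idx j : ℝ))
        = ∑ j ∈ s, ∑ i ∈ Finset.range (d + 1), R.coeff i * (w j * ((idx j : ℝ)) ^ i) := by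
          refine Finset.sum_congr rfl fun j hj => ?_
          rw [hev, Finset.mul_sum]
          exact Finset.sum_congr rfl fun i _ => by ring
      _ = ∑ i ∈ Finset.range (d + 1), R.coeff i * ∑ j ∈ s, w j * ((idx j : ℝ)) ^ i := by
          rw [Finset.sum_comm]
          exact Finset.sum_congr rfl fun i _ => (Finset.mul_sum _ _ _).symm
      _ = 0 := Finset.sum_eq_zero (fun i hi => by
          rcases i with _ | k
          · simp only [pow_zero, mul_one]
            rw [hw0, mul_zero]
          · have hk : k < d := by
              have := Finset.mem_range.1 hi
              omega
            rw [hcoord k hk, mul_zero])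
  rw [key2] at key
  exact key.symm

/-- Existence of a sequence built by strong recursion where each term satisfies a
binary relation with all earlier terms. -/
lemma exists_seq_rec {E : Type*} [Nonempty E] (Q : ℕ → ℕ → E → E → Prop)
    (h : ∀ (n : ℕ) (prev : ℕ → E), ∃ z, ∀ m, m < n → Q n m z (prev m)) :
    ∃ w : ℕ → E, ∀ n m, m < n → Q n m (w n) (w m) := by
  classical
  choose step hstep using h
  let w : ℕ → E := WellFoundedLT.fix
    (fun n rec => step n (fun m => if hm : m < n then rec m hm else Classical.arbitrary E))
  have wdef : ∀ n, w n =
      step n (fun m => if m < n then w m else Classical.arbitrary E) := fun n =>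
    WellFoundedLT.fix_eq _ n
  refine ⟨w, fun n m hm => ?_⟩
  have := hstep n (fun m => if m < n then w m else Classical.arbitrary E) m hm
  rw [wdef n]
  simpa [hm] using this

end AuxMink

/-- Any `d`-degenerate (with witnessing ordering) simple graph on a
countable vertex set, with arbitrary real squared edge lengths `g`, admits a simplicial
isometric map into `ℝ^d_d` whose vertex images are in `d`-general position; in
particular the map is injective. -/
theorem isometric_embedding_of_degenerate (d : ℕ) (hd : 1 ≤ d) {V : Type*}
    (G : SimpleGraph V) (e : ℕ ≃ V)
    (hdeg : ∀ n : ℕ, {m : ℕ | m < n ∧ G.Adj (e n) (e m)}.ncard ≤ d)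
    (g : V → V → ℝ) (hsymm : ∀ a b : V, g a b = g b a) :
    ∃ f : V → Mink d,
      (∀ a b : V, G.Adj a b → mform d (f a - f b) (f a - f b) = g a b) ∧
      InGenPos d (Set.range f) ∧ Function.Injective f := by
  classical
  set E := EuclideanSpace ℝ (Fin d)
  set p : ℕ → E := mcurve d with hp
  -- step existence
  have ex : ∀ (n : ℕ) (prev : ℕ → E), ∃ z : E, ∀ m, m < n →
      (G.Adj (e n) (e m) →
        (inner ℝ (p n - p m) (z - prev m) : ℝ) = g (e n) (e m) / 4) := by
    intro n prev
    set N : Finset ℕ := (Finset.range n).filter (fun m => G.Adj (e n) (e m)) with hN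
    have hNcard : N.card ≤ d := by
      have hco : (↑N : Set ℕ) = {m : ℕ | m < n ∧ G.Adj (e n) (e m)} := by
        ext m; simp [hN]
      have := hdeg n
      rw [← hco, Set.ncard_coe_finset] at this
      exact this
    set s : Finset ℝ := insert (n : ℝ) (N.image (Nat.cast)) with hs
    have hscard : s.card ≤ d + 1 := by
      calc s.card ≤ (N.image (Nat.cast : ℕ → ℝ)).card + 1 := Finset.card_insert_le _ _
      _ ≤ N.card + 1 := by gcongr; exact Finset.card_image_le
      _ ≤ d + 1 := by omega
    obtain ⟨R, hR, hRe⟩ := exists_interp d s hscard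
      (fun x => if x = (n : ℝ) then 0 else
        -(g (e n) (e (Nat.floor x)) / 4 + (inner ℝ (p n - p (Nat.floor x)) (prev (Nat.floor x)) : ℝ)))
    refine ⟨(WithLp.toLp 2 (fun i : Fin d => R.coeff (i.1 + 1)) : E), fun m hm hadj => ?_⟩
    have hmem : (m : ℝ) ∈ s := by
      apply Finset.mem_insert_of_mem
      exact Finset.mem_image_of_mem _ (by simp [hN, hm, hadj])
    have hne : (m : ℝ) ≠ (n : ℝ) := by
      exact_mod_cast Nat.ne_of_lt hm
    have hevm := hRe (m : ℝ) hmem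
    have hevn := hRe (n : ℝ) (Finset.mem_insert_self _ _)
    rw [if_pos rfl] at hevn
    rw [if_neg hne, Nat.floor_natCast] at hevm
    have hkey := inner_mcurve_coeff d R hR n m
    rw [inner_sub_right, hkey, hevn, hevm]
    ring
  obtain ⟨w, hw⟩ := exists_seq_rec
    (fun n m zn zm => G.Adj (e n) (e m) → (inner ℝ (p n - p m) (zn - zm) : ℝ) = g (e n) (e m) / 4)
    ex
  set F : ℕ → Mink d := fun n => (p n + w n, p n - w n) with hF
  refine ⟨fun v => F (e.symm v), ?_, ?_, ?_⟩
  · -- edge lengths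
    have hquad : ∀ n m : ℕ, mform d (F n - F m) (F n - F m)
        = 4 * (inner ℝ (p n - p m) (w n - w m) : ℝ) := by
      have alg : ∀ u t : E, (inner ℝ (u + t) (u + t) : ℝ) - inner ℝ (u - t) (u - t)
          = 4 * inner ℝ u t := by
        intro u t
        rw [real_inner_add_add_self, real_inner_sub_sub_self]
        ring
      intro n m
      have h1 : (F n - F m).1 = (p n - p m) + (w n - w m) := by
        simp only [hF, Prod.fst_sub]
        abel
      have h2 : (F n - F m).2 = (p n - p m) - (w n - w m) := by
        simp only [hF, Prod.snd_sub]
        abel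
      rw [mform, h1, h2]
      exact alg _ _
    intro a b hab
    have hmaineq : ∀ n m : ℕ, m < n → G.Adj (e n) (e m) →
        mform d (F n - F m) (F n - F m) = g (e n) (e m) := by
      intro n m hm hadj
      rw [hquad, hw n m hm hadj]
      ring
    set A := e.symm a with hA
    set B := e.symm b with hB
    have hea : e A = a := e.apply_symm_apply a
    have heb : e B = b := e.apply_symm_apply b
    have hABne : A ≠ B := fun h => (G.ne_of_adj hab) (by rw [← hea, ← heb, h])
    rcases lt_or_gt_of_ne hABne with h | h
    · -- A < B : use symmetry
      have := hmaineq B A h (by rw [hea, heb]; exact hab.symm)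
      rw [hea, heb] at this
      have hneg : F A - F B = -(F B - F A) := by abel
      rw [hneg]
      rw [show mform d (-(F B - F A)) (-(F B - F A)) = mform d (F B - F A) (F B - F A) by
        rw [mform, mform, Prod.fst_neg, Prod.snd_neg, inner_neg_neg, inner_neg_neg]]
      rw [this, hsymm]
    · have := hmaineq A B h (by rw [hea, heb]; exact hab)
      rw [hea, heb] at this
      exact this
  · -- general position
    intro t hts htc
    have hchoice : ∀ x : t, ∃ n : ℕ, F n = (x : Mink d) := by
      rintro ⟨x, hx⟩
      obtain ⟨v, hv⟩ := hts hx
      exact ⟨e.symm v, hv⟩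
    choose idx hidx using hchoice
    have hidxinj : Function.Injective idx := by
      intro x y hxy
      have : (x : Mink d) = (y : Mink d) := by rw [← hidx x, ← hidx y, hxy]
      exact Subtype.ext this
    have hcard : Fintype.card t ≤ d + 1 := by
      rw [Fintype.card_coe]; exact htc
    have hAI : AffineIndependent ℝ (fun j : t => p (idx j)) :=
      mcurve_affineIndependent d idx hidxinj hcard
    -- project
    set L : Mink d →ₗ[ℝ] E :=
      ((1 : ℝ)/2) • (LinearMap.fst ℝ E E + LinearMap.snd ℝ E E) with hL
    have hLF : ∀ n, L (F n) = p n := by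
      intro n
      simp only [hL, hF, LinearMap.smul_apply, LinearMap.add_apply, LinearMap.fst_apply,
        LinearMap.snd_apply]
      rw [show (p n + w n) + (p n - w n) = (2 : ℝ) • p n by
        rw [two_smul]; abel]
      rw [smul_smul]
      norm_num
    have hcomp : (L.toAffineMap ∘ fun x : t => (x : Mink d)) = fun j : t => p (idx j) := by
      funext j
      simp only [Function.comp_apply, LinearMap.coe_toAffineMap, ← hidx j, hLF]
    exact AffineIndependent.of_comp L.toAffineMap (by rw [hcomp]; exact hAI)
  · -- injective
    intro a b hab
    have h1 : F (e.symm a) = F (e.symm b) := hab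
    have h2 : p (e.symm a) = p (e.symm b) := by
      have hx := congrArg Prod.fst h1
      have hy := congrArg Prod.snd h1
      simp only [hF] at hx hy
      have : p (e.symm a) + p (e.symm a) = p (e.symm b) + p (e.symm b) := by
        calc p (e.symm a) + p (e.symm a) = (p (e.symm a) + w (e.symm a)) + (p (e.symm a) - w (e.symm a)) := by abel
        _ = (p (e.symm b) + w (e.symm b)) + (p (e.symm b) - w (e.symm b)) := by rw [hx, hy]
        _ = p (e.symm b) + p (e.symm b) := by abel
      have := congrArg (fun x => ((1:ℝ)/2) • x) this
      simpa [smul_add, smul_smul] using by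
        rw [show p (e.symm a) + p (e.symm a) = (2:ℝ) • p (e.symm a) by rw [two_smul]] at this
        rw [show p (e.symm b) + p (e.symm b) = (2:ℝ) • p (e.symm b) by rw [two_smul]] at this
        simpa [smul_smul] using this
    have h3 : ((e.symm a : ℕ) : ℝ) = ((e.symm b : ℕ) : ℝ) := by
      have := congrArg (fun v : E => v ⟨0, hd⟩) h2
      simpa [hp, mcurve] using this
    have h4 : e.symm a = e.symm b := Nat.cast_injective h3
    exact e.symm.injective h4
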